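/- In any Bayesian valid utility game whose prior ρ is independent (a product distribution), every strategic-form coarse Bayesian solution π satisfies E_{θ∼ρ}[E_{a∼π(θ)}[SW(a)]] ≥ ((1 − 1/e)/2) · OPT; that is, the price of anarchy for strategic-form coarse Bayesian solutions is at least (1 − 1/e)/2 in the independent case. -/

import Mathlib

open Finset

/-- A set function is monotone if it is nondecreasing with respect to inclusion. -/
def MonotoneFn {α : Type*} (f : Finset α → ℝ) : Prop :=
  ∀ ⦃X Y : Finset α⦄, X ⊆ Y → f X ≤ f Y

/-- A set function is submodular if marginal gains diminish as the set grows. -/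
def SubmodularFn {α : Type*} [DecidableEq α] (f : Finset α → ℝ) : Prop :=
  ∀ ⦃X Y : Finset α⦄, X ⊆ Y → ∀ u, u ∉ Y → f (insert u Y) - f Y ≤ f (insert u X) - f X

/-- `OPT = E_{θ∼ρ}[max_{a ∈ A^θ} SW a]`, where `SW a = f {a_1, …, a_n}`. -/
noncomputable def gOPT {n : ℕ} {Θ : Fin n → Type*} [∀ i, Fintype (Θ i)] [∀ i, DecidableEq (Θ i)]
    {E : Type*} [Fintype E] [DecidableEq E]
    (Act : ∀ i, Θ i → Finset E) (hAne : ∀ i t, (Act i t).Nonempty)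
    (ρ : (∀ i, Θ i) → ℝ) (f : Finset E → ℝ) : ℝ :=
  ∑ θ : ∀ i, Θ i, ρ θ *
    (Fintype.piFinset fun i => Act i (θ i)).sup'
      (Fintype.piFinset_nonempty.mpr fun i => hAne i (θ i))
      (fun a => f (Finset.univ.image a))

/-- `STR = max_{s ∈ S} E_{θ∼ρ}[SW (s θ)]`, the maximum over strategy profiles. -/
noncomputable def gSTR {n : ℕ} {Θ : Fin n → Type*} [∀ i, Fintype (Θ i)] [∀ i, DecidableEq (Θ i)]
    {E : Type*} [Fintype E] [DecidableEq E]
    (Act : ∀ i, Θ i → Finset E) (hAne : ∀ i t, (Act i t).Nonempty)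
    (ρ : (∀ i, Θ i) → ℝ) (f : Finset E → ℝ) : ℝ :=
  (Fintype.piFinset fun i => Fintype.piFinset fun t : Θ i => Act i t).sup'
    (Fintype.piFinset_nonempty.mpr fun i => Fintype.piFinset_nonempty.mpr fun t => hAne i t)
    (fun s => ∑ θ : ∀ i, Θ i, ρ θ * f (Finset.univ.image fun i => s i (θ i)))


section Tools
variable {E : Type*} [DecidableEq E] {f : Finset E → ℝ}

lemma marg_nonneg (hmono : MonotoneFn f) (e : E) (S : Finset E) :
    0 ≤ f (insert e S) - f S := by
  have := hmono (Finset.subset_insert e S); linarith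

lemma marg_anti (hmono : MonotoneFn f) (hsub : SubmodularFn f) {X Y : Finset E}
    (hXY : X ⊆ Y) (e : E) :
    f (insert e Y) - f Y ≤ f (insert e X) - f X := by
  by_cases he : e ∈ Y
  · rw [Finset.insert_eq_self.mpr he]
    have := marg_nonneg hmono e X
    linarith
  · exact hsub hXY e he

lemma tool1 (hmono : MonotoneFn f) (hsub : SubmodularFn f) {ι : Type*} [DecidableEq ι]
    (t : Finset ι) (c : ι → E) (S : Finset E) :
    f (S ∪ t.image c) ≤ f S + ∑ i ∈ t, (f (insert (c i) S) - f S) := by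
  induction t using Finset.induction_on with
  | empty => simp
  | @insert a t ha ih =>
    rw [Finset.image_insert, Finset.sum_insert ha, Finset.union_insert]
    have h1 : f (insert (c a) (S ∪ t.image c)) - f (S ∪ t.image c)
        ≤ f (insert (c a) S) - f S :=
      marg_anti hmono hsub Finset.subset_union_left (c a)
    linarith
end Tools

lemma L1 {Q : Type*} [Fintype Q] [DecidableEq Q] {G : Q → Type*} [∀ q, Fintype (G q)]
    (w : ∀ q, G q → ℝ) (q₀ : Q) (hw : ∑ b, w q₀ b = 1) (F : (∀ q, G q) → ℝ) :
    ∑ g : ∀ q, G q, (∏ q, w q (g q)) * F g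
      = ∑ a : G q₀, w q₀ a * ∑ g : ∀ q, G q, (∏ q, w q (g q)) * F (Function.update g q₀ a) := by
  have key : ∀ (a : G q₀) (g : ∀ q, G q),
      (∏ q, w q (Function.update g q₀ a q)) = w q₀ a * ∏ q ∈ univ.erase q₀, w q (g q) := by
    intro a g
    rw [← Finset.mul_prod_erase univ (fun q => w q (Function.update g q₀ a q)) (mem_univ q₀)]
    rw [Function.update_self]
    congr 1
    refine Finset.prod_congr rfl fun q hq => ?_
    rw [Function.update_of_ne (Finset.ne_of_mem_erase hq)]
  have split : ∀ g : ∀ q, G q,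
      (∏ q, w q (g q)) = w q₀ (g q₀) * ∏ q ∈ univ.erase q₀, w q (g q) :=
    fun g => (Finset.mul_prod_erase univ (fun q => w q (g q)) (mem_univ q₀)).symm
  have σinv : Function.Involutive
      (fun x : G q₀ × (∀ q, G q) => (x.2 q₀, Function.update x.2 q₀ x.1)) := by
    intro x
    simp [Function.update_idem, Function.update_eq_self]
  symm
  calc ∑ a : G q₀, w q₀ a * ∑ g : ∀ q, G q, (∏ q, w q (g q)) * F (Function.update g q₀ a)
      = ∑ x : G q₀ × (∀ q, G q),
          w q₀ x.1 * ((∏ q, w q (x.2 q)) * F (Function.update x.2 q₀ x.1)) := by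
        rw [Fintype.sum_prod_type]
        exact Fintype.sum_congr _ _ fun a => Finset.mul_sum _ _ _
    _ = ∑ x : G q₀ × (∀ q, G q),
          w q₀ ((x.2 q₀, Function.update x.2 q₀ x.1).1)
            * ((∏ q, w q ((x.2 q₀, Function.update x.2 q₀ x.1).2 q))
              * F (Function.update (x.2 q₀, Function.update x.2 q₀ x.1).2 q₀
                    ((x.2 q₀, Function.update x.2 q₀ x.1).1))) := by
        exact (Equiv.sum_comp (σinv.toPerm _) _).symm
    _ = ∑ x : G q₀ × (∀ q, G q),
          w q₀ x.1 * (w q₀ (x.2 q₀) * ((∏ q ∈ univ.erase q₀, w q (x.2 q)) * F x.2)) := by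
        refine Fintype.sum_congr _ _ fun x => ?_
        simp only [key, Function.update_idem, Function.update_eq_self]
        ring
    _ = ∑ g : ∀ q, G q, (∏ q, w q (g q)) * F g := by
        rw [Fintype.sum_prod_type, ← Finset.sum_comm]
        refine Fintype.sum_congr _ _ fun g => ?_
        show ∑ y : G q₀, w q₀ y * (w q₀ (g q₀) * ((∏ q ∈ univ.erase q₀, w q (g q)) * F g)) = _
        rw [← Finset.sum_mul, hw, one_mul, split]
        ring

set_option linter.unusedSectionVars false
set_option maxHeartbeats 2000000

section CG
variable {n M : ℕ} {Ω : Type*} [Fintype Ω] {E : Type*} [DecidableEq E]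

/-- weight on a single coordinate (scenario, coin) -/
noncomputable def cgW (p : Ω → ℝ) (s : ℝ) : Ω × Bool → ℝ :=
  fun v => p v.1 * (if v.2 then s else 1 - s)

/-- the revealed set after `m` rounds -/
def cgR (M : ℕ) (c : Fin n → Ω → E) (g : (Fin n × Fin M) → Ω × Bool) (m : ℕ) : Finset E :=
  (univ.filter fun q : Fin n × Fin M => (q.2:ℕ) < m ∧ (g q).2 = true).image
    (fun q => c q.1 (g q).1)

/-- partial round: rounds `< m` plus, in round `m`, parts `< i` -/
def cgS (M : ℕ) (c : Fin n → Ω → E) (g : (Fin n × Fin M) → Ω × Bool) (m i : ℕ) : Finset E :=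
  (univ.filter fun q : Fin n × Fin M =>
    ((q.2:ℕ) < m ∨ ((q.2:ℕ) = m ∧ (q.1:ℕ) < i)) ∧ (g q).2 = true).image
    (fun q => c q.1 (g q).1)

/-- everything through round `m` except coordinate `q₀` -/
def cgZ (M : ℕ) (c : Fin n → Ω → E) (g : (Fin n × Fin M) → Ω × Bool) (m : ℕ)
    (q₀ : Fin n × Fin M) : Finset E :=
  (univ.filter fun q : Fin n × Fin M =>
    ((q.2:ℕ) < m + 1 ∧ (g q).2 = true) ∧ q ≠ q₀).image
    (fun q => c q.1 (g q).1)

noncomputable def cgPhi (M : ℕ) (p : Ω → ℝ) (s : ℝ) (c : Fin n → Ω → E) (f : Finset E → ℝ)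
    (m : ℕ) : ℝ :=
  ∑ g : (Fin n × Fin M) → Ω × Bool, (∏ q, cgW p s (g q)) * f (cgR M c g m)

variable {p : Ω → ℝ} {s : ℝ} {c : Fin n → Ω → E} {g : (Fin n × Fin M) → Ω × Bool}

lemma cgS_zero (m : ℕ) : cgS M c g m 0 = cgR M c g m := by
  unfold cgS cgR
  congr 1
  apply Finset.filter_congr
  intro q _
  constructor
  · rintro ⟨h1, h2⟩; exact ⟨by omega, h2⟩
  · rintro ⟨h1, h2⟩; exact ⟨Or.inl h1, h2⟩

lemma cgS_top (m : ℕ) : cgS M c g m n = cgR M c g (m+1) := by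
  unfold cgS cgR
  congr 1
  apply Finset.filter_congr
  intro q _
  have := q.1.isLt
  constructor
  · rintro ⟨h1, h2⟩; exact ⟨by omega, h2⟩
  · rintro ⟨h1, h2⟩; exact ⟨by omega, h2⟩

lemma cgS_subset_Z {m : ℕ} (i : Fin n) (hm : m < M) :
    cgS M c g m i ⊆ cgZ M c g m (i, ⟨m, hm⟩) := by
  unfold cgS cgZ
  apply Finset.image_subset_image
  intro q hq
  simp only [Finset.mem_filter, Finset.mem_univ, true_and] at hq ⊢
  obtain ⟨h1, h2⟩ := hq
  refine ⟨⟨by omega, h2⟩, ?_⟩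
  intro hq
  rcases h1 with h1 | ⟨h1a, h1b⟩
  · rw [hq] at h1; simp at h1
  · rw [hq] at h1b; simp at h1b

lemma cgZ_subset_R {m : ℕ} (q₀ : Fin n × Fin M) :
    cgZ M c g m q₀ ⊆ cgR M c g (m+1) := by
  unfold cgZ cgR
  apply Finset.image_subset_image
  intro q hq
  simp only [Finset.mem_filter, Finset.mem_univ, true_and] at hq ⊢
  exact hq.1

lemma cgZ_update {m : ℕ} (q₀ : Fin n × Fin M) (a : Ω × Bool) :
    cgZ M c (Function.update g q₀ a) m q₀ = cgZ M c g m q₀ := by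
  unfold cgZ
  apply Finset.ext
  intro e
  simp only [Finset.mem_image, Finset.mem_filter, Finset.mem_univ, true_and]
  constructor
  · rintro ⟨q, ⟨⟨h1, h2⟩, h3⟩, h4⟩
    rw [Function.update_of_ne h3] at h2 h4
    exact ⟨q, ⟨⟨h1, h2⟩, h3⟩, h4⟩
  · rintro ⟨q, ⟨⟨h1, h2⟩, h3⟩, h4⟩
    refine ⟨q, ⟨⟨h1, ?_⟩, h3⟩, ?_⟩ <;> rw [Function.update_of_ne h3] <;> assumption

lemma cgS_succ_true {m : ℕ} (i : Fin n) (hm : m < M)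
    (hK : (g (i, ⟨m, hm⟩)).2 = true) :
    cgS M c g m ((i:ℕ)+1) = insert (c i (g (i, ⟨m, hm⟩)).1) (cgS M c g m i) := by
  unfold cgS
  have hfe : (univ.filter fun q : Fin n × Fin M =>
      ((q.2:ℕ) < m ∨ ((q.2:ℕ) = m ∧ (q.1:ℕ) < (i:ℕ)+1)) ∧ (g q).2 = true)
      = insert (i, (⟨m, hm⟩ : Fin M)) (univ.filter fun q : Fin n × Fin M =>
      ((q.2:ℕ) < m ∨ ((q.2:ℕ) = m ∧ (q.1:ℕ) < (i:ℕ))) ∧ (g q).2 = true) := by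
    apply Finset.ext
    intro q
    simp only [Finset.mem_insert, Finset.mem_filter, Finset.mem_univ, true_and]
    constructor
    · rintro ⟨h1, h2⟩
      by_cases hq : q = (i, ⟨m, hm⟩)
      · exact Or.inl hq
      · refine Or.inr ⟨?_, h2⟩
        rcases h1 with h1 | ⟨h1a, h1b⟩
        · exact Or.inl h1
        · refine Or.inr ⟨h1a, ?_⟩
          rcases Nat.lt_succ_iff_lt_or_eq.mp h1b with h | h
          · exact h
          · exfalso; apply hq
            have e2 : q.2 = (⟨m, hm⟩ : Fin M) := Fin.ext h1a
            have e1 : q.1 = i := Fin.ext h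
            exact Prod.ext e1 e2
    · rintro (rfl | ⟨h1, h2⟩)
      · exact ⟨Or.inr ⟨rfl, Nat.lt_succ_self _⟩, hK⟩
      · refine ⟨?_, h2⟩
        rcases h1 with h1 | ⟨h1a, h1b⟩
        · exact Or.inl h1
        · exact Or.inr ⟨h1a, by omega⟩
  rw [hfe, Finset.image_insert]

lemma cgS_succ_false {m : ℕ} (i : Fin n) (hm : m < M)
    (hK : ¬ ((g (i, ⟨m, hm⟩)).2 = true)) :
    cgS M c g m ((i:ℕ)+1) = cgS M c g m i := by
  unfold cgS
  congr 1
  apply Finset.filter_congr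
  intro q _
  constructor
  · rintro ⟨h1, h2⟩
    refine ⟨?_, h2⟩
    rcases h1 with h1 | ⟨h1a, h1b⟩
    · exact Or.inl h1
    · refine Or.inr ⟨h1a, ?_⟩
      rcases Nat.lt_succ_iff_lt_or_eq.mp h1b with h | h
      · exact h
      · exfalso
        apply hK
        have : q = (i, (⟨m, hm⟩ : Fin M)) := Prod.ext (Fin.ext h) (Fin.ext h1a)
        rwa [← this]
  · rintro ⟨h1, h2⟩
    refine ⟨?_, h2⟩
    rcases h1 with h1 | ⟨h1a, h1b⟩
    · exact Or.inl h1
    · exact Or.inr ⟨h1a, by omega⟩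

end CG

section CG2
variable {n M : ℕ} {Ω : Type*} [Fintype Ω] {E : Type*} [DecidableEq E]
variable {p : Ω → ℝ} {s : ℝ} {c : Fin n → Ω → E} {f : Finset E → ℝ}

lemma cgW_nonneg (hp0 : ∀ ω, 0 ≤ p ω) (hs0 : 0 ≤ s) (hs1 : s ≤ 1) :
    ∀ v, 0 ≤ cgW p s v := by
  rintro ⟨ω, b⟩
  cases b
  · exact mul_nonneg (hp0 ω) (by simp [cgW]; linarith)
  · exact mul_nonneg (hp0 ω) (by simp [cgW]; linarith)

lemma cgW_sum (hp1 : ∑ ω, p ω = 1) : ∑ v : Ω × Bool, cgW p s v = 1 := by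
  rw [Fintype.sum_prod_type]
  have : ∀ ω : Ω, ∑ b : Bool, cgW p s (ω, b) = p ω := by
    intro ω; rw [Fintype.sum_bool]; simp [cgW]; ring
  rw [Fintype.sum_congr _ _ this, hp1]

lemma cgWt_sum (hp1 : ∑ ω, p ω = 1) :
    ∑ g : (Fin n × Fin M) → Ω × Bool, ∏ q, cgW p s (g q) = 1 := by
  have h := Finset.prod_univ_sum (fun _ : Fin n × Fin M => (univ : Finset (Ω × Bool)))
    (fun _ v => cgW p s v)
  rw [Fintype.piFinset_univ] at h
  rw [← h]
  rw [Finset.prod_congr rfl (fun q _ => cgW_sum (s := s) hp1)]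
  simp

lemma swap_helper {α β γ : Type*} [Fintype α] [Fintype β] [Fintype γ]
    (t : ℝ) (pp : α → ℝ) (WW : γ → ℝ) (X : β → α → γ → ℝ) :
    t * ∑ a, pp a * ∑ g, WW g * ∑ i, X i a g
      = ∑ i, t * ∑ a, pp a * ∑ g, WW g * X i a g := by
  have h1 : ∀ a, pp a * ∑ g, WW g * ∑ i, X i a g
      = ∑ i, pp a * ∑ g, WW g * X i a g := by
    intro a
    rw [Finset.sum_congr rfl (fun g (_ : g ∈ univ) => by rw [Finset.mul_sum])]
    rw [Finset.sum_comm, Finset.mul_sum]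
  rw [Finset.sum_congr rfl (fun a (_ : a ∈ univ) => h1 a)]
  rw [Finset.sum_comm, Finset.mul_sum]

lemma gainA (hp0 : ∀ ω, 0 ≤ p ω) (hp1 : ∑ ω, p ω = 1)
    (hf0 : ∀ X, 0 ≤ f X) (hmono : MonotoneFn f) (hsub : SubmodularFn f)
    (hs0 : 0 ≤ s) (hs1 : s ≤ 1) (m : ℕ) (hm : m < M) :
    cgPhi M p s c f m + s * (∑ ω, p ω * f (univ.image fun i => c i ω))
      ≤ (1 + s) * cgPhi M p s c f (m + 1) := by
  have hw1 : ∑ v : Ω × Bool, cgW p s v = 1 := cgW_sum hp1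
  have hw0 : ∀ v, 0 ≤ cgW p s v := cgW_nonneg hp0 hs0 hs1
  have hWt0 : ∀ g : (Fin n × Fin M) → Ω × Bool, 0 ≤ ∏ q, cgW p s (g q) :=
    fun g => Finset.prod_nonneg fun q _ => hw0 _
  have hWt1 : ∑ g : (Fin n × Fin M) → Ω × Bool, ∏ q, cgW p s (g q) = 1 := cgWt_sum hp1
  have step3 : ∀ (i : Fin n) (g : (Fin n × Fin M) → Ω × Bool),
      (if (g (i, ⟨m, hm⟩)).2 = true then
        f (insert (c i (g (i, ⟨m, hm⟩)).1) (cgZ M c g m (i, ⟨m, hm⟩)))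
          - f (cgZ M c g m (i, ⟨m, hm⟩)) else 0)
      ≤ f (cgS M c g m ((i:ℕ)+1)) - f (cgS M c g m (i:ℕ)) := by
    intro i g
    by_cases hK : (g (i, ⟨m, hm⟩)).2 = true
    · rw [if_pos hK, cgS_succ_true i hm hK]
      exact marg_anti hmono hsub (cgS_subset_Z i hm) _
    · rw [if_neg hK, cgS_succ_false i hm hK, sub_self]
  have htel : ∀ g, f (cgR M c g (m+1)) - f (cgR M c g m)
      = ∑ i : Fin n, (f (cgS M c g m ((i:ℕ)+1)) - f (cgS M c g m (i:ℕ))) := by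
    intro g
    rw [Fin.sum_univ_eq_sum_range (fun i => f (cgS M c g m (i+1)) - f (cgS M c g m i)) n]
    rw [Finset.sum_range_sub (fun i => f (cgS M c g m i))]
    rw [cgS_zero, cgS_top]
  have hL1 : ∀ i : Fin n,
      ∑ g : (Fin n × Fin M) → Ω × Bool, (∏ q, cgW p s (g q)) *
        (if (g (i, ⟨m, hm⟩)).2 = true then
          f (insert (c i (g (i, ⟨m, hm⟩)).1) (cgZ M c g m (i, ⟨m, hm⟩)))
            - f (cgZ M c g m (i, ⟨m, hm⟩)) else 0)
      = s * ∑ ω, p ω * ∑ g : (Fin n × Fin M) → Ω × Bool, (∏ q, cgW p s (g q)) *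
          (f (insert (c i ω) (cgZ M c g m (i, ⟨m, hm⟩))) - f (cgZ M c g m (i, ⟨m, hm⟩))) := by
    intro i
    have key := L1 (G := fun _ : Fin n × Fin M => Ω × Bool) (fun _ => cgW p s) (i, ⟨m, hm⟩) hw1
      (fun g => if (g (i, ⟨m, hm⟩)).2 = true then
          f (insert (c i (g (i, ⟨m, hm⟩)).1) (cgZ M c g m (i, ⟨m, hm⟩)))
            - f (cgZ M c g m (i, ⟨m, hm⟩)) else 0)
    rw [key]
    simp only [Function.update_self, cgZ_update]
    rw [Fintype.sum_prod_type]
    simp only [Fintype.sum_bool]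
    rw [Finset.mul_sum]
    apply Finset.sum_congr rfl
    intro ω _
    simp only [cgW, Bool.false_eq_true, if_false, if_true, mul_zero,
      Finset.sum_const_zero, add_zero]
    ring
  -- pointwise passage from Z to R(m+1)
  have step5 : ∀ (i : Fin n) (ω : Ω) (g : (Fin n × Fin M) → Ω × Bool),
      f (insert (c i ω) (cgR M c g (m+1))) - f (cgR M c g (m+1))
      ≤ f (insert (c i ω) (cgZ M c g m (i, ⟨m, hm⟩))) - f (cgZ M c g m (i, ⟨m, hm⟩)) :=
    fun i ω g => marg_anti hmono hsub (cgZ_subset_R (i, ⟨m, hm⟩)) _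
  -- tool1 bound
  have step6 : ∀ (ω : Ω) (g : (Fin n × Fin M) → Ω × Bool),
      f (univ.image fun i => c i ω) - f (cgR M c g (m+1))
      ≤ ∑ i : Fin n, (f (insert (c i ω) (cgR M c g (m+1))) - f (cgR M c g (m+1))) := by
    intro ω g
    have h1 := tool1 hmono hsub (univ : Finset (Fin n)) (fun i => c i ω) (cgR M c g (m+1))
    have h2 : f (univ.image fun i => c i ω)
        ≤ f (cgR M c g (m+1) ∪ univ.image fun i => c i ω) :=
      hmono Finset.subset_union_right
    linarith
  -- assemble
  set Phi1 := cgPhi M p s c f (m+1) with hPhi1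
  set OPTv := ∑ ω, p ω * f (univ.image fun i => c i ω) with hOPTv
  have main : s * (OPTv - Phi1) ≤ Phi1 - cgPhi M p s c f m := by
    have e1 : Phi1 - cgPhi M p s c f m
        = ∑ i : Fin n, ∑ g : (Fin n × Fin M) → Ω × Bool, (∏ q, cgW p s (g q)) *
            (f (cgS M c g m ((i:ℕ)+1)) - f (cgS M c g m (i:ℕ))) := by
      rw [hPhi1]
      unfold cgPhi
      rw [← Finset.sum_sub_distrib, Finset.sum_comm]
      apply Finset.sum_congr rfl
      intro g _
      rw [← mul_sub, htel g, Finset.mul_sum]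
    have e2 : ∑ i : Fin n, (s * ∑ ω, p ω * ∑ g : (Fin n × Fin M) → Ω × Bool,
          (∏ q, cgW p s (g q)) *
          (f (insert (c i ω) (cgZ M c g m (i, ⟨m, hm⟩))) - f (cgZ M c g m (i, ⟨m, hm⟩))))
        ≤ Phi1 - cgPhi M p s c f m := by
      rw [e1]
      apply Finset.sum_le_sum
      intro i _
      rw [← hL1 i]
      apply Finset.sum_le_sum
      intro g _
      exact mul_le_mul_of_nonneg_left (step3 i g) (hWt0 g)
    refine le_trans ?_ e2
    -- s*(OPTv - Phi1) ≤ Σ_i s Σ_ω pω Σ_g W margZ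
    have e3 : ∀ i : Fin n, s * ∑ ω, p ω * ∑ g : (Fin n × Fin M) → Ω × Bool,
          (∏ q, cgW p s (g q)) *
          (f (insert (c i ω) (cgR M c g (m+1))) - f (cgR M c g (m+1)))
        ≤ s * ∑ ω, p ω * ∑ g : (Fin n × Fin M) → Ω × Bool,
          (∏ q, cgW p s (g q)) *
          (f (insert (c i ω) (cgZ M c g m (i, ⟨m, hm⟩))) - f (cgZ M c g m (i, ⟨m, hm⟩))) := by
      intro i
      apply mul_le_mul_of_nonneg_left _ hs0
      apply Finset.sum_le_sum
      intro ω _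
      apply mul_le_mul_of_nonneg_left _ (hp0 ω)
      apply Finset.sum_le_sum
      intro g _
      exact mul_le_mul_of_nonneg_left (step5 i ω g) (hWt0 g)
    refine le_trans ?_ (Finset.sum_le_sum fun i _ => e3 i)
    -- s*(OPTv - Phi1) ≤ Σ_i s Σ_ω pω Σ_g W margR
    have inner4 : ∀ ω : Ω, ∑ g : (Fin n × Fin M) → Ω × Bool, (∏ q, cgW p s (g q)) *
          (f (univ.image fun i => c i ω) - f (cgR M c g (m+1)))
        = f (univ.image fun i => c i ω) - Phi1 := by
      intro ω
      rw [Finset.sum_congr rfl (fun g _ => mul_sub _ _ (f (cgR M c g (m+1)))),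
        Finset.sum_sub_distrib, ← Finset.sum_mul, hWt1, one_mul, hPhi1]
      rfl
    have e4 : s * (OPTv - Phi1)
        = s * ∑ ω, p ω * ∑ g : (Fin n × Fin M) → Ω × Bool, (∏ q, cgW p s (g q)) *
            (f (univ.image fun i => c i ω) - f (cgR M c g (m+1))) := by
      have h7 : ∑ ω, p ω * ∑ g : (Fin n × Fin M) → Ω × Bool, (∏ q, cgW p s (g q)) *
            (f (univ.image fun i => c i ω) - f (cgR M c g (m+1)))
          = OPTv - Phi1 := by
        rw [Finset.sum_congr rfl (fun ω _ => by rw [inner4 ω])]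
        rw [Finset.sum_congr rfl (fun ω _ => mul_sub (p ω) _ _), Finset.sum_sub_distrib,
          ← Finset.sum_mul, hp1, one_mul, ← hOPTv]
      rw [h7]
    rw [e4]
    -- now: s Σ_ω pω Σ_g W (fA - fR) ≤ Σ_i s Σ_ω pω Σ_g W margR
    have e5 : ∀ ω (g : (Fin n × Fin M) → Ω × Bool),
        (∏ q, cgW p s (g q)) * (f (univ.image fun i => c i ω) - f (cgR M c g (m+1)))
        ≤ (∏ q, cgW p s (g q)) * ∑ i : Fin n,
            (f (insert (c i ω) (cgR M c g (m+1))) - f (cgR M c g (m+1))) :=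
      fun ω g => mul_le_mul_of_nonneg_left (step6 ω g) (hWt0 g)
    have e6 : s * ∑ ω, p ω * ∑ g : (Fin n × Fin M) → Ω × Bool, (∏ q, cgW p s (g q)) *
          (f (univ.image fun i => c i ω) - f (cgR M c g (m+1)))
        ≤ s * ∑ ω, p ω * ∑ g : (Fin n × Fin M) → Ω × Bool, (∏ q, cgW p s (g q)) *
            ∑ i : Fin n, (f (insert (c i ω) (cgR M c g (m+1))) - f (cgR M c g (m+1))) := by
      apply mul_le_mul_of_nonneg_left _ hs0
      apply Finset.sum_le_sum
      intro ω _
      apply mul_le_mul_of_nonneg_left _ (hp0 ω)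
      exact Finset.sum_le_sum fun g _ => e5 ω g
    refine le_trans e6 (le_of_eq ?_)
    exact swap_helper s p (fun g : (Fin n × Fin M) → Ω × Bool => ∏ q, cgW p s (g q))
      (fun i ω g => f (insert (c i ω) (cgR M c g (m+1))) - f (cgR M c g (m+1)))
  rw [hPhi1] at main
  linarith
end CG2

section CG3
variable {n M : ℕ} {Ω : Type*} [Fintype Ω] {E : Type*} [DecidableEq E]
variable {p : Ω → ℝ} {s : ℝ} {c : Fin n → Ω → E} {f : Finset E → ℝ}

lemma swap_helper2 {α β : Type*} [Fintype α] [Fintype β]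
    (A : α → ℝ) (B : β → ℝ) (X : α → β → ℝ) :
    ∑ a, A a * ∑ b, B b * X a b = ∑ b, B b * ∑ a, A a * X a b := by
  rw [Finset.sum_congr rfl (fun a (_ : a ∈ univ) => by rw [Finset.mul_sum])]
  rw [Finset.sum_comm]
  refine Finset.sum_congr rfl fun b _ => ?_
  rw [Finset.mul_sum]
  refine Finset.sum_congr rfl fun a _ => ?_
  ring

lemma cgPi_sum (hp1 : ∑ ω, p ω = 1) : ∑ η : Fin n → Ω, ∏ i, p (η i) = 1 := by
  have h := Finset.prod_univ_sum (fun _ : Fin n => (univ : Finset Ω)) (fun _ ω => p ω)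
  rw [Fintype.piFinset_univ] at h
  rw [← h, Finset.prod_congr rfl (fun i _ => hp1)]
  simp

/-- the one-pick set for parts `< k` -/
def cgBk (c : Fin n → Ω → E) (η : Fin n → Ω) (k : ℕ) : Finset E :=
  (univ.filter fun i : Fin n => (i:ℕ) < k).image (fun i => c i (η i))

/-- the process contributions of parts `≥ k` -/
def cgU (M : ℕ) (c : Fin n → Ω → E) (g : (Fin n × Fin M) → Ω × Bool) (k : ℕ) : Finset E :=
  (univ.filter fun q : Fin n × Fin M => k ≤ (q.1:ℕ) ∧ (g q).2 = true).image
    (fun q => c q.1 (g q).1)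

variable {g : (Fin n × Fin M) → Ω × Bool} {η : Fin n → Ω}

lemma cgBk_zero : cgBk c η 0 = ∅ := by
  unfold cgBk
  rw [Finset.filter_false_of_mem, Finset.image_empty]
  intro i _; omega

lemma cgBk_top : cgBk c η n = univ.image (fun i => c i (η i)) := by
  unfold cgBk
  rw [Finset.filter_true_of_mem]
  intro i _; exact i.isLt

lemma cgU_zero : cgU M c g 0 = cgR M c g M := by
  unfold cgU cgR
  congr 1
  apply Finset.filter_congr
  intro q _
  have := q.2.isLt
  constructor
  · rintro ⟨_, h⟩; exact ⟨by omega, h⟩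
  · rintro ⟨_, h⟩; exact ⟨by omega, h⟩

lemma cgU_top : cgU M c g n = ∅ := by
  unfold cgU
  rw [Finset.filter_false_of_mem, Finset.image_empty]
  intro q _
  rintro ⟨h, _⟩
  exact absurd q.1.isLt (by omega)

lemma cgBk_succ {k : ℕ} (hk : k < n) :
    cgBk c η (k+1) = insert (c ⟨k, hk⟩ (η ⟨k, hk⟩)) (cgBk c η k) := by
  unfold cgBk
  have hfe : (univ.filter fun i : Fin n => (i:ℕ) < k+1)
      = insert (⟨k, hk⟩ : Fin n) (univ.filter fun i : Fin n => (i:ℕ) < k) := by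
    apply Finset.ext
    intro i
    simp only [Finset.mem_insert, Finset.mem_filter, Finset.mem_univ, true_and]
    constructor
    · intro h
      rcases Nat.lt_succ_iff_lt_or_eq.mp h with h | h
      · exact Or.inr h
      · exact Or.inl (Fin.ext h)
    · rintro (rfl | h)
      · exact Nat.lt_succ_self k
      · omega
  rw [hfe, Finset.image_insert]

lemma cgBk_update {k : ℕ} {j : Fin n} (hj : ¬ ((j:ℕ) < k)) (ω : Ω) :
    cgBk c (Function.update η j ω) k = cgBk c η k := by
  unfold cgBk
  apply Finset.image_congr
  intro i hi
  simp only [Finset.mem_coe, Finset.mem_filter, Finset.mem_univ, true_and] at hi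
  have hij : i ≠ j := by intro h; subst h; exact hj hi
  show c i (Function.update η j ω i) = c i (η i)
  rw [Function.update_of_ne hij]

lemma cgU_update {k : ℕ} {j : Fin n} {m' : Fin M} (hj : (j:ℕ) < k) (a : Ω × Bool) :
    cgU M c (Function.update g (j, m') a) k = cgU M c g k := by
  unfold cgU
  apply Finset.ext
  intro e
  simp only [Finset.mem_image, Finset.mem_filter, Finset.mem_univ, true_and]
  have hne : ∀ q : Fin n × Fin M, k ≤ (q.1:ℕ) → q ≠ (j, m') := by
    intro q hq h
    rw [h] at hq
    simp at hq
    omega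
  constructor
  · rintro ⟨q, ⟨h1, h2⟩, h3⟩
    rw [Function.update_of_ne (hne q h1)] at h2 h3
    exact ⟨q, ⟨h1, h2⟩, h3⟩
  · rintro ⟨q, ⟨h1, h2⟩, h3⟩
    refine ⟨q, ⟨h1, ?_⟩, ?_⟩ <;> rw [Function.update_of_ne (hne q h1)] <;> assumption

lemma cgU_split {k : ℕ} (hk : k < n) :
    cgU M c g k = cgU M c g (k+1) ∪
      (univ.filter fun m' : Fin M => (g (⟨k, hk⟩, m')).2 = true).image
        (fun m' => c ⟨k, hk⟩ (g (⟨k, hk⟩, m')).1) := by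
  apply Finset.ext
  intro e
  simp only [cgU, Finset.mem_union, Finset.mem_image, Finset.mem_filter,
    Finset.mem_univ, true_and]
  constructor
  · rintro ⟨q, ⟨h1, h2⟩, h3⟩
    rcases Nat.lt_or_ge k (q.1:ℕ) with h | h
    · exact Or.inl ⟨q, ⟨h, h2⟩, h3⟩
    · have hq1 : q.1 = (⟨k, hk⟩ : Fin n) := Fin.ext (show (q.1:ℕ) = k by omega)
      have hq : ((⟨k, hk⟩ : Fin n), q.2) = q := Prod.ext_iff.mpr ⟨hq1.symm, rfl⟩
      refine Or.inr ⟨q.2, ?_, ?_⟩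
      · rw [hq]; exact h2
      · rw [hq, ← hq1]; exact h3
  · rintro (⟨q, ⟨h1, h2⟩, h3⟩ | ⟨m', h2, h3⟩)
    · exact ⟨q, ⟨by omega, h2⟩, h3⟩
    · exact ⟨(⟨k, hk⟩, m'), ⟨le_refl k, h2⟩, h3⟩


lemma boolsum (pp : Ω → ℝ) (t : ℝ) (Y : Ω → ℝ) :
    ∑ a : Ω × Bool, cgW pp t a * (if a.2 = true then Y a.1 else 0)
      = t * ∑ ω, pp ω * Y ω := by
  rw [Fintype.sum_prod_type]
  rw [Finset.mul_sum]
  apply Finset.sum_congr rfl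
  intro ω _
  rw [Fintype.sum_bool]
  simp only [cgW, Bool.false_eq_true, if_false, if_true, mul_zero, add_zero]
  ring

lemma domB (hp0 : ∀ ω, 0 ≤ p ω) (hp1 : ∑ ω, p ω = 1)
    (hf0 : ∀ X, 0 ≤ f X) (hmono : MonotoneFn f) (hsub : SubmodularFn f)
    (hs0 : 0 ≤ s) (hs1 : s ≤ 1) (hMs : (M:ℝ) * s = 1) :
    cgPhi M p s c f M
      ≤ ∑ η : Fin n → Ω, (∏ i, p (η i)) * f (univ.image fun i => c i (η i)) := by
  have hw1 : ∑ v : Ω × Bool, cgW p s v = 1 := cgW_sum hp1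
  have hw0 : ∀ v, 0 ≤ cgW p s v := cgW_nonneg hp0 hs0 hs1
  have hWt0 : ∀ g : (Fin n × Fin M) → Ω × Bool, 0 ≤ ∏ q, cgW p s (g q) :=
    fun g => Finset.prod_nonneg fun q _ => hw0 _
  have hWt1 : ∑ g : (Fin n × Fin M) → Ω × Bool, ∏ q, cgW p s (g q) = 1 := cgWt_sum hp1
  have hPi0 : ∀ η : Fin n → Ω, 0 ≤ ∏ i, p (η i) :=
    fun η => Finset.prod_nonneg fun i _ => hp0 _
  set D : ℕ → ℝ := fun k => ∑ η : Fin n → Ω, (∏ i, p (η i)) *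
    ∑ g : (Fin n × Fin M) → Ω × Bool, (∏ q, cgW p s (g q)) *
      f (cgBk c η k ∪ cgU M c g k) with hD
  have hD0 : D 0 = cgPhi M p s c f M := by
    simp only [hD, cgBk_zero, cgU_zero, Finset.empty_union]
    rw [← Finset.sum_mul, cgPi_sum hp1, one_mul]
    rfl
  have hDn : D n = ∑ η : Fin n → Ω, (∏ i, p (η i)) * f (univ.image fun i => c i (η i)) := by
    simp only [hD, cgBk_top, cgU_top, Finset.union_empty]
    apply Finset.sum_congr rfl
    intro η _
    congr 1
    rw [← Finset.sum_mul, hWt1, one_mul]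
  have hstep : ∀ k, ∀ hk : k < n, D k ≤ D (k+1) := by
    intro k hk
    have hupd : ∀ (a : Ω × Bool) (m' : Fin M) (g : (Fin n × Fin M) → Ω × Bool),
        cgU M c (Function.update g (⟨k, hk⟩, m') a) (k+1) = cgU M c g (k+1) :=
      fun a m' g => cgU_update (Nat.lt_succ_self k) a
    have hL1' : ∀ (η : Fin n → Ω) (m' : Fin M),
        ∑ g : (Fin n × Fin M) → Ω × Bool, (∏ q, cgW p s (g q)) *
          (if (g (⟨k, hk⟩, m')).2 = true then
            f (insert (c ⟨k, hk⟩ (g (⟨k, hk⟩, m')).1) (cgBk c η k ∪ cgU M c g (k+1)))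
              - f (cgBk c η k ∪ cgU M c g (k+1)) else 0)
        = s * ∑ ω, p ω * ∑ g : (Fin n × Fin M) → Ω × Bool, (∏ q, cgW p s (g q)) *
            (f (insert (c ⟨k, hk⟩ ω) (cgBk c η k ∪ cgU M c g (k+1)))
              - f (cgBk c η k ∪ cgU M c g (k+1))) := by
      intro η m'
      have key := L1 (G := fun _ : Fin n × Fin M => Ω × Bool) (fun _ => cgW p s)
        (⟨k, hk⟩, m') hw1
        (fun g => if (g (⟨k, hk⟩, m')).2 = true then
            f (insert (c ⟨k, hk⟩ (g (⟨k, hk⟩, m')).1) (cgBk c η k ∪ cgU M c g (k+1)))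
              - f (cgBk c η k ∪ cgU M c g (k+1)) else 0)
      rw [key]
      have hip : ∀ a : Ω × Bool,
          (∑ g : (Fin n × Fin M) → Ω × Bool, (∏ q, cgW p s (g q)) *
            (if ((Function.update g (⟨k, hk⟩, m') a) (⟨k, hk⟩, m')).2 = true then
              f (insert (c ⟨k, hk⟩ ((Function.update g (⟨k, hk⟩, m') a) (⟨k, hk⟩, m')).1)
                (cgBk c η k ∪ cgU M c (Function.update g (⟨k, hk⟩, m') a) (k+1)))
                - f (cgBk c η k ∪ cgU M c (Function.update g (⟨k, hk⟩, m') a) (k+1)) else 0))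
          = (if a.2 = true then
              (∑ g : (Fin n × Fin M) → Ω × Bool, (∏ q, cgW p s (g q)) *
                (f (insert (c ⟨k, hk⟩ a.1) (cgBk c η k ∪ cgU M c g (k+1)))
                  - f (cgBk c η k ∪ cgU M c g (k+1)))) else 0) := by
        intro a
        by_cases ha : a.2 = true
        · rw [if_pos ha]
          apply Finset.sum_congr rfl
          intro g _
          rw [Function.update_self, hupd a m' g, if_pos ha]
        · rw [if_neg ha]
          rw [Finset.sum_congr rfl (fun g (_ : g ∈ univ) => by
            rw [Function.update_self, if_neg ha, mul_zero])]
          exact Finset.sum_const_zero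
      rw [Finset.sum_congr rfl (fun a (_ : a ∈ univ) => by rw [hip a])]
      exact boolsum p s (fun ω => ∑ g : (Fin n × Fin M) → Ω × Bool, (∏ q, cgW p s (g q)) *
        (f (insert (c ⟨k, hk⟩ ω) (cgBk c η k ∪ cgU M c g (k+1)))
          - f (cgBk c η k ∪ cgU M c g (k+1))))
    -- pointwise tool1 bound
    have pt : ∀ (η : Fin n → Ω) (g : (Fin n × Fin M) → Ω × Bool),
        f (cgBk c η k ∪ cgU M c g k)
        ≤ f (cgBk c η k ∪ cgU M c g (k+1))
          + ∑ m' : Fin M, (if (g (⟨k, hk⟩, m')).2 = true then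
              f (insert (c ⟨k, hk⟩ (g (⟨k, hk⟩, m')).1) (cgBk c η k ∪ cgU M c g (k+1)))
                - f (cgBk c η k ∪ cgU M c g (k+1)) else 0) := by
      intro η g
      have h1 := tool1 hmono hsub (univ.filter fun m' : Fin M => (g (⟨k, hk⟩, m')).2 = true)
        (fun m' => c ⟨k, hk⟩ (g (⟨k, hk⟩, m')).1) (cgBk c η k ∪ cgU M c g (k+1))
      rw [Finset.sum_filter] at h1
      rw [cgU_split hk, ← Finset.union_assoc]
      exact h1
    have inner_bound : ∀ η : Fin n → Ω,
        ∑ g : (Fin n × Fin M) → Ω × Bool, (∏ q, cgW p s (g q)) *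
          f (cgBk c η k ∪ cgU M c g k)
        ≤ (∑ g : (Fin n × Fin M) → Ω × Bool, (∏ q, cgW p s (g q)) *
              f (cgBk c η k ∪ cgU M c g (k+1)))
          + ∑ ω, p ω * ∑ g : (Fin n × Fin M) → Ω × Bool, (∏ q, cgW p s (g q)) *
              (f (insert (c ⟨k, hk⟩ ω) (cgBk c η k ∪ cgU M c g (k+1)))
                - f (cgBk c η k ∪ cgU M c g (k+1))) := by
      intro η
      have b1 : ∑ g : (Fin n × Fin M) → Ω × Bool, (∏ q, cgW p s (g q)) *
            f (cgBk c η k ∪ cgU M c g k)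
          ≤ ∑ g : (Fin n × Fin M) → Ω × Bool, (∏ q, cgW p s (g q)) *
            (f (cgBk c η k ∪ cgU M c g (k+1))
              + ∑ m' : Fin M, (if (g (⟨k, hk⟩, m')).2 = true then
                  f (insert (c ⟨k, hk⟩ (g (⟨k, hk⟩, m')).1) (cgBk c η k ∪ cgU M c g (k+1)))
                    - f (cgBk c η k ∪ cgU M c g (k+1)) else 0)) :=
        Finset.sum_le_sum fun g _ => mul_le_mul_of_nonneg_left (pt η g) (hWt0 g)
      refine le_trans b1 (le_of_eq ?_)
      rw [Finset.sum_congr rfl (fun g (_ : g ∈ univ) => mul_add _ _ _),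
        Finset.sum_add_distrib]
      congr 1
      rw [Finset.sum_congr rfl (fun g (_ : g ∈ univ) => by rw [Finset.mul_sum]),
        Finset.sum_comm]
      rw [Finset.sum_congr rfl (fun m' (_ : m' ∈ univ) => hL1' η m')]
      rw [Finset.sum_const, Finset.card_univ, Fintype.card_fin, nsmul_eq_mul,
        ← mul_assoc, hMs, one_mul]
    -- identify D (k+1)
    have e2 : ∀ (ω : Ω) (η : Fin n → Ω),
        (∑ g : (Fin n × Fin M) → Ω × Bool, (∏ q, cgW p s (g q)) *
          f (insert (c ⟨k, hk⟩ ω)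
            (cgBk c (Function.update η ⟨k, hk⟩ ω) k ∪ cgU M c g (k+1))))
        = (∑ g : (Fin n × Fin M) → Ω × Bool, (∏ q, cgW p s (g q)) *
            f (cgBk c η k ∪ cgU M c g (k+1)))
          + (∑ g : (Fin n × Fin M) → Ω × Bool, (∏ q, cgW p s (g q)) *
            (f (insert (c ⟨k, hk⟩ ω) (cgBk c η k ∪ cgU M c g (k+1)))
              - f (cgBk c η k ∪ cgU M c g (k+1)))) := by
      intro ω η
      rw [cgBk_update (lt_irrefl k) ω]
      rw [← Finset.sum_add_distrib]
      apply Finset.sum_congr rfl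
      intro g _
      ring
    have hDk1 : D (k+1)
        = ∑ η : Fin n → Ω, (∏ i, p (η i)) *
            ((∑ g : (Fin n × Fin M) → Ω × Bool, (∏ q, cgW p s (g q)) *
                f (cgBk c η k ∪ cgU M c g (k+1)))
              + ∑ ω, p ω * ∑ g : (Fin n × Fin M) → Ω × Bool, (∏ q, cgW p s (g q)) *
                  (f (insert (c ⟨k, hk⟩ ω) (cgBk c η k ∪ cgU M c g (k+1)))
                    - f (cgBk c η k ∪ cgU M c g (k+1)))) := by
      simp only [hD]
      have e1 : ∀ η : Fin n → Ω, ∀ g : (Fin n × Fin M) → Ω × Bool,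
          f (cgBk c η (k+1) ∪ cgU M c g (k+1))
            = f (insert (c ⟨k, hk⟩ (η ⟨k, hk⟩)) (cgBk c η k ∪ cgU M c g (k+1))) := by
        intro η g
        rw [cgBk_succ hk, Finset.insert_union]
      rw [Finset.sum_congr rfl (fun η (_ : η ∈ univ) => by
        rw [Finset.sum_congr rfl (fun g (_ : g ∈ univ) => by rw [e1 η g])])]
      have key2 := L1 (G := fun _ : Fin n => Ω) (fun _ => p) ⟨k, hk⟩ hp1
        (fun η => ∑ g : (Fin n × Fin M) → Ω × Bool, (∏ q, cgW p s (g q)) *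
          f (insert (c ⟨k, hk⟩ (η ⟨k, hk⟩)) (cgBk c η k ∪ cgU M c g (k+1))))
      rw [key2]
      simp only [Function.update_self]
      rw [Finset.sum_congr rfl (fun ω (_ : ω ∈ univ) => by
        rw [Finset.sum_congr rfl (fun η (_ : η ∈ univ) => by rw [e2 ω η])])]
      have e3 : ∀ ω : Ω, ∑ η : Fin n → Ω, (∏ i, p (η i)) *
          ((∑ g : (Fin n × Fin M) → Ω × Bool, (∏ q, cgW p s (g q)) *
              f (cgBk c η k ∪ cgU M c g (k+1)))
            + (∑ g : (Fin n × Fin M) → Ω × Bool, (∏ q, cgW p s (g q)) *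
              (f (insert (c ⟨k, hk⟩ ω) (cgBk c η k ∪ cgU M c g (k+1)))
                - f (cgBk c η k ∪ cgU M c g (k+1)))))
          = (∑ η : Fin n → Ω, (∏ i, p (η i)) *
              ∑ g : (Fin n × Fin M) → Ω × Bool, (∏ q, cgW p s (g q)) *
                f (cgBk c η k ∪ cgU M c g (k+1)))
            + ∑ η : Fin n → Ω, (∏ i, p (η i)) *
              ∑ g : (Fin n × Fin M) → Ω × Bool, (∏ q, cgW p s (g q)) *
                (f (insert (c ⟨k, hk⟩ ω) (cgBk c η k ∪ cgU M c g (k+1)))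
                  - f (cgBk c η k ∪ cgU M c g (k+1))) := by
        intro ω
        rw [← Finset.sum_add_distrib]
        exact Finset.sum_congr rfl fun η _ => mul_add _ _ _
      rw [Finset.sum_congr rfl (fun ω (_ : ω ∈ univ) => by rw [e3 ω])]
      rw [Finset.sum_congr rfl (fun ω (_ : ω ∈ univ) => mul_add (p ω) _ _),
        Finset.sum_add_distrib, ← Finset.sum_mul, hp1, one_mul]
      have e5 : (∑ η : Fin n → Ω, (∏ i, p (η i)) *
            ((∑ g : (Fin n × Fin M) → Ω × Bool, (∏ q, cgW p s (g q)) *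
                f (cgBk c η k ∪ cgU M c g (k+1)))
              + ∑ ω, p ω * ∑ g : (Fin n × Fin M) → Ω × Bool, (∏ q, cgW p s (g q)) *
                  (f (insert (c ⟨k, hk⟩ ω) (cgBk c η k ∪ cgU M c g (k+1)))
                    - f (cgBk c η k ∪ cgU M c g (k+1)))))
          = (∑ η : Fin n → Ω, (∏ i, p (η i)) *
              ∑ g : (Fin n × Fin M) → Ω × Bool, (∏ q, cgW p s (g q)) *
                f (cgBk c η k ∪ cgU M c g (k+1)))
            + ∑ η : Fin n → Ω, (∏ i, p (η i)) *
                ∑ ω, p ω * ∑ g : (Fin n × Fin M) → Ω × Bool, (∏ q, cgW p s (g q)) *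
                  (f (insert (c ⟨k, hk⟩ ω) (cgBk c η k ∪ cgU M c g (k+1)))
                    - f (cgBk c η k ∪ cgU M c g (k+1))) := by
        rw [← Finset.sum_add_distrib]
        exact Finset.sum_congr rfl fun η _ => mul_add _ _ _
      rw [e5]
      congr 1
      exact swap_helper2 p (fun η : Fin n → Ω => ∏ i, p (η i))
        (fun ω η => ∑ g : (Fin n × Fin M) → Ω × Bool, (∏ q, cgW p s (g q)) *
          (f (insert (c ⟨k, hk⟩ ω) (cgBk c η k ∪ cgU M c g (k+1)))
            - f (cgBk c η k ∪ cgU M c g (k+1))))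
    calc D k ≤ ∑ η : Fin n → Ω, (∏ i, p (η i)) *
            ((∑ g : (Fin n × Fin M) → Ω × Bool, (∏ q, cgW p s (g q)) *
                f (cgBk c η k ∪ cgU M c g (k+1)))
              + ∑ ω, p ω * ∑ g : (Fin n × Fin M) → Ω × Bool, (∏ q, cgW p s (g q)) *
                  (f (insert (c ⟨k, hk⟩ ω) (cgBk c η k ∪ cgU M c g (k+1)))
                    - f (cgBk c η k ∪ cgU M c g (k+1)))) := by
          simp only [hD]
          exact Finset.sum_le_sum fun η _ =>
            mul_le_mul_of_nonneg_left (inner_bound η) (hPi0 η)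
      _ = D (k+1) := hDk1.symm
  have hchain : ∀ k, k ≤ n → D 0 ≤ D k := by
    intro k
    induction k with
    | zero => intro _; exact le_refl _
    | succ k ih => intro hkn; exact le_trans (ih (by omega)) (hstep k (by omega))
  rw [← hD0, ← hDn]
  exact hchain n le_rfl

end CG3

lemma corr_gap_N {n : ℕ} (N : ℕ) {Ω : Type*} [Fintype Ω] {E : Type*} [DecidableEq E]
    (p : Ω → ℝ) (hp0 : ∀ ω, 0 ≤ p ω) (hp1 : ∑ ω, p ω = 1)
    (c : Fin n → Ω → E) (f : Finset E → ℝ) (hf0 : ∀ X, 0 ≤ f X)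
    (hmono : MonotoneFn f) (hsub : SubmodularFn f) :
    (1 - ((1 + ((N:ℝ)+1)⁻¹)⁻¹) ^ (N+1)) * (∑ ω, p ω * f (univ.image fun i => c i ω))
      ≤ ∑ η : Fin n → Ω, (∏ i, p (η i)) * f (univ.image fun i => c i (η i)) := by
  set M : ℕ := N + 1 with hMdef
  have hMpos : (0:ℝ) < (M:ℝ) := by positivity
  set s : ℝ := ((M:ℝ))⁻¹ with hsdef
  have hs0 : 0 ≤ s := by positivity
  have hs1 : s ≤ 1 := by
    rw [hsdef, inv_le_one_iff₀]
    right; exact_mod_cast Nat.one_le_iff_ne_zero.mpr (by omega)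
  have hMs : (M:ℝ) * s = 1 := mul_inv_cancel₀ (ne_of_gt hMpos)
  set OPTv : ℝ := ∑ ω, p ω * f (univ.image fun i => c i ω) with hOPTdef
  have hOPT0 : 0 ≤ OPTv := Finset.sum_nonneg fun ω _ => mul_nonneg (hp0 ω) (hf0 _)
  have claimA : ∀ m, m < M → cgPhi M p s c f m + s * OPTv ≤ (1 + s) * cgPhi M p s c f (m+1) :=
    fun m hm => gainA hp0 hp1 hf0 hmono hsub hs0 hs1 m hm
  have claimB : cgPhi M p s c f M
      ≤ ∑ η : Fin n → Ω, (∏ i, p (η i)) * f (univ.image fun i => c i (η i)) :=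
    domB hp0 hp1 hf0 hmono hsub hs0 hs1 hMs
  have hWt0 : ∀ g : (Fin n × Fin M) → Ω × Bool, 0 ≤ ∏ q, cgW p s (g q) :=
    fun g => Finset.prod_nonneg fun q _ => cgW_nonneg hp0 hs0 hs1 _
  have claimC : ∀ m, m ≤ M → (1 - ((1+s)⁻¹)^m) * OPTv ≤ cgPhi M p s c f m := by
    intro m
    induction m with
    | zero =>
      intro _
      simp only [pow_zero]
      have h0 : 0 ≤ cgPhi M p s c f 0 :=
        Finset.sum_nonneg fun g _ => mul_nonneg (hWt0 g) (hf0 _)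
      linarith
    | succ m ih =>
      intro hm
      have hmM : m < M := by omega
      have h1 := claimA m hmM
      have h2 := ih (by omega)
      have h1s : (0:ℝ) < 1 + s := by linarith
      have h4 : (1 - ((1+s)⁻¹)^m) * OPTv + s * OPTv ≤ (1+s) * cgPhi M p s c f (m+1) := by
        linarith
      have h5 := mul_le_mul_of_nonneg_left h4 (inv_nonneg.mpr h1s.le)
      have h6 : (1+s)⁻¹ * ((1+s) * cgPhi M p s c f (m+1)) = cgPhi M p s c f (m+1) := by
        field_simp
      have heq : (1+s)⁻¹ * ((1 - ((1+s)⁻¹)^m) * OPTv + s * OPTv)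
          = (1 - ((1+s)⁻¹)^(m+1)) * OPTv := by
        have hne : (1+s) ≠ 0 := ne_of_gt h1s
        rw [pow_succ]
        field_simp
        ring
      rw [h6, heq] at h5
      exact h5
  have final := le_trans (claimC M le_rfl) claimB
  refine le_trans (le_of_eq ?_) final
  rw [hsdef, hMdef]
  push_cast
  ring

lemma corr_gap {n : ℕ} {Ω : Type*} [Fintype Ω] {E : Type*} [DecidableEq E]
    (p : Ω → ℝ) (hp0 : ∀ ω, 0 ≤ p ω) (hp1 : ∑ ω, p ω = 1)
    (c : Fin n → Ω → E) (f : Finset E → ℝ) (hf0 : ∀ X, 0 ≤ f X)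
    (hmono : MonotoneFn f) (hsub : SubmodularFn f) :
    (1 - (Real.exp 1)⁻¹) * (∑ ω, p ω * f (univ.image fun i => c i ω))
      ≤ ∑ η : Fin n → Ω, (∏ i, p (η i)) * f (univ.image fun i => c i (η i)) := by
  set OPTv : ℝ := ∑ ω, p ω * f (univ.image fun i => c i ω) with hOPTdef
  set Bval : ℝ := ∑ η : Fin n → Ω, (∏ i, p (η i)) * f (univ.image fun i => c i (η i)) with hBdef
  have hOPT0 : 0 ≤ OPTv := Finset.sum_nonneg fun ω _ => mul_nonneg (hp0 ω) (hf0 _)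
  have hexp : ∀ N : ℕ, ((1 + ((N:ℝ)+1)⁻¹)⁻¹) ^ (N+1)
      ≤ (Real.exp 1)⁻¹ * (1 + ((N:ℝ)+1)⁻¹) := by
    intro N
    set u : ℝ := ((N:ℝ)+1)⁻¹ with hu
    have hu0 : 0 < u := by positivity
    have h1u : (0:ℝ) < 1 + u := by linarith
    have hlog1 : u/(1+u) ≤ Real.log (1+u) := by
      have h := Real.log_le_sub_one_of_pos (show (0:ℝ) < (1+u)⁻¹ by positivity)
      rw [Real.log_inv] at h
      have heq : (1+u)⁻¹ - 1 = -(u/(1+u)) := by field_simp; ring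
      rw [heq] at h
      linarith
    have hsum : (1:ℝ) ≤ ((N:ℝ)+2) * Real.log (1+u) := by
      have heq : ((N:ℝ)+2) * (u/(1+u)) = 1 := by
        rw [hu]
        have hN1 : ((N:ℝ)+1) ≠ 0 := by positivity
        field_simp
        ring
      have hmul := mul_le_mul_of_nonneg_left hlog1 (show (0:ℝ) ≤ (N:ℝ)+2 by positivity)
      linarith
    have hpow : Real.exp 1 ≤ (1+u)^(N+2) := by
      have h1 : (1+u)^(N+2) = Real.exp (((N:ℝ)+2) * Real.log (1+u)) := by
        rw [show ((N:ℝ)+2) = ((N+2 : ℕ) : ℝ) by push_cast; ring]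
        rw [Real.exp_nat_mul, Real.exp_log h1u]
      rw [h1]
      exact Real.exp_le_exp.mpr hsum
    have hpos : (0:ℝ) < (1+u)^(N+1) := by positivity
    have h2 : (1+u)⁻¹^(N+1) * Real.exp 1 ≤ (1+u) := by
      have h3 : (1+u)⁻¹^(N+1) * Real.exp 1 ≤ (1+u)⁻¹^(N+1) * (1+u)^(N+2) :=
        mul_le_mul_of_nonneg_left hpow (pow_nonneg (by positivity) _)
      have h4 : (1+u)⁻¹^(N+1) * (1+u)^(N+2) = 1+u := by
        have hne : (1+u) ≠ 0 := ne_of_gt h1u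
        rw [inv_pow, pow_succ (1+u) (N+1), ← mul_assoc, inv_mul_cancel₀ (pow_ne_zero _ hne), one_mul]
      linarith
    have he : (0:ℝ) < Real.exp 1 := Real.exp_pos 1
    rw [show (Real.exp 1)⁻¹ * (1+u) = (1+u) / Real.exp 1 by rw [div_eq_inv_mul]]
    rw [le_div_iff₀ he]
    exact h2
  have hN : ∀ N : ℕ, (1 - (Real.exp 1)⁻¹ - (Real.exp 1)⁻¹ * ((N:ℝ)+1)⁻¹) * OPTv ≤ Bval := by
    intro N
    have h1 := corr_gap_N N p hp0 hp1 c f hf0 hmono hsub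
    have h2 : (1 - (Real.exp 1)⁻¹ - (Real.exp 1)⁻¹ * ((N:ℝ)+1)⁻¹) * OPTv
        ≤ (1 - ((1 + ((N:ℝ)+1)⁻¹)⁻¹) ^ (N+1)) * OPTv := by
      apply mul_le_mul_of_nonneg_right _ hOPT0
      have := hexp N
      have hh : (Real.exp 1)⁻¹ * (1 + ((N:ℝ)+1)⁻¹)
          = (Real.exp 1)⁻¹ + (Real.exp 1)⁻¹ * ((N:ℝ)+1)⁻¹ := by ring
      rw [hh] at this
      linarith
    exact le_trans h2 h1
  refine le_of_forall_pos_le_add ?_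
  intro ε hε
  have hek : (0:ℝ) < Real.exp 1 := Real.exp_pos 1
  obtain ⟨N, hN'⟩ := exists_nat_ge ((Real.exp 1)⁻¹ * OPTv / ε)
  have hterm : (Real.exp 1)⁻¹ * ((N:ℝ)+1)⁻¹ * OPTv ≤ ε := by
    have hN1 : (0:ℝ) < (N:ℝ)+1 := by positivity
    have h2 : (Real.exp 1)⁻¹ * OPTv / ε ≤ (N:ℝ)+1 := by
      have : ((N:ℝ)) ≤ (N:ℝ)+1 := by linarith
      linarith
    rw [div_le_iff₀ hε] at h2
    have h3 := mul_le_mul_of_nonneg_right h2 (le_of_lt (inv_pos.mpr hN1))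
    have h4 : ((N:ℝ)+1) * ε * ((N:ℝ)+1)⁻¹ = ε := by field_simp
    have h5 : (Real.exp 1)⁻¹ * ((N:ℝ)+1)⁻¹ * OPTv
        = (Real.exp 1)⁻¹ * OPTv * ((N:ℝ)+1)⁻¹ := by ring
    rw [h5]
    linarith
  have := hN N
  have hexpand : (1 - (Real.exp 1)⁻¹) * OPTv
      = (1 - (Real.exp 1)⁻¹ - (Real.exp 1)⁻¹ * ((N:ℝ)+1)⁻¹) * OPTv
        + (Real.exp 1)⁻¹ * ((N:ℝ)+1)⁻¹ * OPTv := by ring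
  linarith

section PartA

lemma mulpt {c x y : ℝ} (hc : 0 ≤ c) (h : c ≠ 0 → x ≤ y) : c * x ≤ c * y := by
  by_cases hc0 : c = 0
  · subst hc0; simp
  · exact mul_le_mul_of_nonneg_left (h hc0) hc

lemma swap_helper3 {α β γ : Type*} [Fintype α] [Fintype β] [Fintype γ]
    (pp : α → ℝ) (WW : α → γ → ℝ) (X : β → α → γ → ℝ) :
    ∑ a, pp a * ∑ g, WW a g * ∑ i, X i a g = ∑ i, ∑ a, pp a * ∑ g, WW a g * X i a g := by
  have h1 : ∀ a, pp a * ∑ g, WW a g * ∑ i, X i a g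
      = ∑ i, pp a * ∑ g, WW a g * X i a g := by
    intro a
    rw [Finset.sum_congr rfl (fun g (_ : g ∈ univ) => by rw [Finset.mul_sum])]
    rw [Finset.sum_comm, Finset.mul_sum]
  rw [Finset.sum_congr rfl (fun a (_ : a ∈ univ) => h1 a)]
  rw [Finset.sum_comm]

lemma image_update {n : ℕ} {E : Type*} [DecidableEq E] (a : Fin n → E) (i : Fin n) (b : E) :
    univ.image (Function.update a i b) = insert b ((univ.erase i).image a) := by
  apply Finset.ext
  intro e
  simp only [Finset.mem_image, Finset.mem_insert, Finset.mem_erase, Finset.mem_univ,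
    true_and, and_true]
  constructor
  · rintro ⟨j, rfl⟩
    by_cases hji : j = i
    · subst hji; rw [Function.update_self]; exact Or.inl rfl
    · rw [Function.update_of_ne hji]; exact Or.inr ⟨j, hji, rfl⟩
  · rintro (rfl | ⟨j, hji, rfl⟩)
    · exact ⟨i, Function.update_self _ _ _⟩
    · exact ⟨j, Function.update_of_ne hji _ _⟩

lemma partA {n : ℕ} {Θ : Fin n → Type*} [∀ i, Fintype (Θ i)] [∀ i, DecidableEq (Θ i)]
    {E : Type*} [Fintype E] [DecidableEq E]
    (Act : ∀ i, Θ i → Finset E)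
    (ρ : (∀ i, Θ i) → ℝ) (hρ0 : ∀ θ, 0 ≤ ρ θ)
    (f : Finset E → ℝ) (hmono : MonotoneFn f) (hsub : SubmodularFn f)
    (v : Fin n → (Fin n → E) → ℝ)
    (htotal : ∀ a : Fin n → E, (∀ i, ∃ t, a i ∈ Act i t) →
      ∑ i, v i a ≤ f (Finset.univ.image a))
    (hmarg : ∀ a : Fin n → E, (∀ i, ∃ t, a i ∈ Act i t) → ∀ i,
      f (Finset.univ.image a) - f ((Finset.univ.image a).erase (a i)) ≤ v i a)
    (π : (∀ i, Θ i) → (Fin n → E) → ℝ)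
    (hπ0 : ∀ θ a, 0 ≤ π θ a) (hπ1 : ∀ θ, ∑ a, π θ a = 1)
    (hπsupp : ∀ θ a, π θ a ≠ 0 → ∀ i, a i ∈ Act i (θ i))
    (hSFCBS : ∀ i : Fin n, ∀ sᵢ : Θ i → E, (∀ t, sᵢ t ∈ Act i t) →
      ∑ θ, ρ θ * ∑ a, π θ a * v i (Function.update a i (sᵢ (θ i)))
        ≤ ∑ θ, ρ θ * ∑ a, π θ a * v i a)
    (st : ∀ i, Θ i → E) (hst : ∀ i t, st i t ∈ Act i t) :
    ∑ θ, ρ θ * f (univ.image fun i => st i (θ i))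
      ≤ 2 * ∑ θ, ρ θ * ∑ a, π θ a * f (univ.image a) := by
  -- equilibrium total utility bound
  have hEq : ∑ i, ∑ θ, ρ θ * ∑ a, π θ a * v i a
      ≤ ∑ θ, ρ θ * ∑ a, π θ a * f (univ.image a) := by
    rw [← swap_helper3 ρ π (fun i θ a => v i a)]
    apply Finset.sum_le_sum
    intro θ _
    apply mul_le_mul_of_nonneg_left _ (hρ0 θ)
    apply Finset.sum_le_sum
    intro a _
    exact mulpt (hπ0 θ a) (fun hne => htotal a (fun i => ⟨θ i, hπsupp θ a hne i⟩))
  -- marginal contribution bound, pointwise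
  have hM : ∀ (θ : ∀ i, Θ i) (a : Fin n → E), (∀ i, a i ∈ Act i (θ i)) →
      f (univ.image fun i => st i (θ i)) - f (univ.image a)
        ≤ ∑ i, v i (Function.update a i (st i (θ i))) := by
    intro θ a ha
    have htel2 : f (univ.image a ∪ cgBk (fun i (θ' : ∀ j, Θ j) => st i (θ' i)) (fun _ => θ) n)
          - f (univ.image a ∪ cgBk (fun i (θ' : ∀ j, Θ j) => st i (θ' i)) (fun _ => θ) 0)
        = ∑ i : Fin n, (f (univ.image a ∪ cgBk (fun i (θ' : ∀ j, Θ j) => st i (θ' i)) (fun _ => θ) ((i:ℕ)+1))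
            - f (univ.image a ∪ cgBk (fun i (θ' : ∀ j, Θ j) => st i (θ' i)) (fun _ => θ) (i:ℕ))) := by
      rw [Fin.sum_univ_eq_sum_range (fun k =>
        f (univ.image a ∪ cgBk (fun i (θ' : ∀ j, Θ j) => st i (θ' i)) (fun _ => θ) (k+1))
          - f (univ.image a ∪ cgBk (fun i (θ' : ∀ j, Θ j) => st i (θ' i)) (fun _ => θ) k)) n]
      rw [Finset.sum_range_sub (fun k =>
        f (univ.image a ∪ cgBk (fun i (θ' : ∀ j, Θ j) => st i (θ' i)) (fun _ => θ) k))]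
    have hper : ∀ i : Fin n,
        f (univ.image a ∪ cgBk (fun i (θ' : ∀ j, Θ j) => st i (θ' i)) (fun _ => θ) ((i:ℕ)+1))
          - f (univ.image a ∪ cgBk (fun i (θ' : ∀ j, Θ j) => st i (θ' i)) (fun _ => θ) (i:ℕ))
        ≤ v i (Function.update a i (st i (θ i))) := by
      intro i
      have hY1 : univ.image a ∪ cgBk (fun i (θ' : ∀ j, Θ j) => st i (θ' i)) (fun _ => θ) ((i:ℕ)+1)
          = insert (st i (θ i))
            (univ.image a ∪ cgBk (fun i (θ' : ∀ j, Θ j) => st i (θ' i)) (fun _ => θ) (i:ℕ)) := by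
        rw [cgBk_succ i.isLt, Finset.union_insert]
      rw [hY1]
      have hCsub : (univ.erase i).image a
          ⊆ univ.image a ∪ cgBk (fun i (θ' : ∀ j, Θ j) => st i (θ' i)) (fun _ => θ) (i:ℕ) :=
        subset_trans (Finset.image_subset_image (Finset.erase_subset _ _))
          Finset.subset_union_left
      have h1 : f (insert (st i (θ i))
            (univ.image a ∪ cgBk (fun i (θ' : ∀ j, Θ j) => st i (θ' i)) (fun _ => θ) (i:ℕ)))
            - f (univ.image a ∪ cgBk (fun i (θ' : ∀ j, Θ j) => st i (θ' i)) (fun _ => θ) (i:ℕ))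
          ≤ f (insert (st i (θ i)) ((univ.erase i).image a)) - f ((univ.erase i).image a) :=
        marg_anti hmono hsub hCsub _
      have h2 : f (((univ.erase i).image a).erase (st i (θ i))) ≤ f ((univ.erase i).image a) :=
        hmono (Finset.erase_subset _ _)
      have ha' : ∀ j, ∃ t, (Function.update a i (st i (θ i))) j ∈ Act j t := by
        intro j
        by_cases hji : j = i
        · subst hji; rw [Function.update_self]; exact ⟨θ j, hst j (θ j)⟩
        · rw [Function.update_of_ne hji]; exact ⟨θ j, ha j⟩
      have h3 := hmarg (Function.update a i (st i (θ i))) ha' i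
      rw [Function.update_self, image_update a i (st i (θ i))] at h3
      rw [Finset.erase_insert_eq_erase] at h3
      linarith
    have hup : f (univ.image fun i => st i (θ i))
        ≤ f (univ.image a ∪ cgBk (fun i (θ' : ∀ j, Θ j) => st i (θ' i)) (fun _ => θ) n) := by
      apply hmono
      rw [cgBk_top]
      exact Finset.subset_union_right
    have hdown : f (univ.image a ∪ cgBk (fun i (θ' : ∀ j, Θ j) => st i (θ' i)) (fun _ => θ) 0)
        = f (univ.image a) := by
      rw [cgBk_zero, Finset.union_empty]
    have := Finset.sum_le_sum (fun i (_ : i ∈ univ) => hper i)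
    rw [← htel2] at this
    linarith
  -- deviation bound
  have hDev : ∑ i, ∑ θ, ρ θ * ∑ a, π θ a * v i (Function.update a i (st i (θ i)))
      ≤ ∑ i, ∑ θ, ρ θ * ∑ a, π θ a * v i a :=
    Finset.sum_le_sum fun i _ => hSFCBS i (st i) (hst i)
  -- main chain
  have key : ∑ θ, ρ θ * f (univ.image fun i => st i (θ i))
        - ∑ θ, ρ θ * ∑ a, π θ a * f (univ.image a)
      ≤ ∑ θ, ρ θ * ∑ a, π θ a *
          (f (univ.image fun i => st i (θ i)) - f (univ.image a)) := by
    have heq : ∀ θ, ρ θ * ∑ a, π θ a *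
        (f (univ.image fun i => st i (θ i)) - f (univ.image a))
        = ρ θ * f (univ.image fun i => st i (θ i))
          - ρ θ * ∑ a, π θ a * f (univ.image a) := by
      intro θ
      rw [Finset.sum_congr rfl (fun a (_ : a ∈ univ) => mul_sub (π θ a) _ _),
        Finset.sum_sub_distrib, ← Finset.sum_mul, hπ1, one_mul]
      ring
    rw [Finset.sum_congr rfl (fun θ (_ : θ ∈ univ) => heq θ), Finset.sum_sub_distrib]
  have key2 : ∑ θ, ρ θ * ∑ a, π θ a *
        (f (univ.image fun i => st i (θ i)) - f (univ.image a))
      ≤ ∑ θ, ρ θ * ∑ a, π θ a * ∑ i, v i (Function.update a i (st i (θ i))) := by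
    apply Finset.sum_le_sum
    intro θ _
    apply mul_le_mul_of_nonneg_left _ (hρ0 θ)
    apply Finset.sum_le_sum
    intro a _
    exact mulpt (hπ0 θ a) (fun hne => hM θ a (hπsupp θ a hne))
  have key3 : ∑ θ, ρ θ * ∑ a, π θ a * ∑ i, v i (Function.update a i (st i (θ i)))
      = ∑ i, ∑ θ, ρ θ * ∑ a, π θ a * v i (Function.update a i (st i (θ i))) :=
    swap_helper3 ρ π (fun i θ a => v i (Function.update a i (st i (θ i))))
  linarith [le_trans (le_trans key (le_trans key2 (le_of_eq key3))) (le_trans hDev hEq)]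

end PartA

/-- In any Bayesian valid utility game whose prior is independent
(a product distribution), every strategic-form coarse Bayesian solution `π` satisfies
`E_{θ∼ρ}[E_{a∼π θ}[SW a]] ≥ ((1 − 1/e)/2) · OPT`:
the price of anarchy for SFCBSs is at least `(1 − 1/e)/2` in the independent case. -/
theorem sfcbs_poa_independent
    {n : ℕ} {Θ : Fin n → Type*} [∀ i, Fintype (Θ i)] [∀ i, DecidableEq (Θ i)]
    [∀ i, Nonempty (Θ i)]
    {E : Type*} [Fintype E] [DecidableEq E]
    (Act : ∀ i, Θ i → Finset E) (hAne : ∀ i t, (Act i t).Nonempty)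
    (hdisj : ∀ p q : Σ i : Fin n, Θ i, p ≠ q → Disjoint (Act p.1 p.2) (Act q.1 q.2))
    (ρ : (∀ i, Θ i) → ℝ) (hρ0 : ∀ θ, 0 ≤ ρ θ) (hρ1 : ∑ θ, ρ θ = 1)
    (ρi : ∀ i, Θ i → ℝ) (hρi0 : ∀ i t, 0 ≤ ρi i t) (hρi1 : ∀ i, ∑ t, ρi i t = 1)
    (hprod : ∀ θ, ρ θ = ∏ i, ρi i (θ i))
    (f : Finset E → ℝ) (hf0 : ∀ X, 0 ≤ f X)
    (hmono : MonotoneFn f) (hsub : SubmodularFn f)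
    -- valid utility game: utilities, total utility and marginal contribution conditions
    (v : Fin n → (Fin n → E) → ℝ) (hv0 : ∀ i a, 0 ≤ v i a)
    (htotal : ∀ a : Fin n → E, (∀ i, ∃ t, a i ∈ Act i t) →
      ∑ i, v i a ≤ f (Finset.univ.image a))
    (hmarg : ∀ a : Fin n → E, (∀ i, ∃ t, a i ∈ Act i t) → ∀ i,
      f (Finset.univ.image a) - f ((Finset.univ.image a).erase (a i)) ≤ v i a)
    -- π is a type-dependent distribution supported on A^θ
    (π : (∀ i, Θ i) → (Fin n → E) → ℝ)
    (hπ0 : ∀ θ a, 0 ≤ π θ a) (hπ1 : ∀ θ, ∑ a, π θ a = 1)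
    (hπsupp : ∀ θ a, π θ a ≠ 0 → ∀ i, a i ∈ Act i (θ i))
    -- π is a strategic-form coarse Bayesian solution
    (hSFCBS : ∀ i : Fin n, ∀ sᵢ : Θ i → E, (∀ t, sᵢ t ∈ Act i t) →
      ∑ θ, ρ θ * ∑ a, π θ a * v i (Function.update a i (sᵢ (θ i)))
        ≤ ∑ θ, ρ θ * ∑ a, π θ a * v i a) :
    ((1 - (Real.exp 1)⁻¹) / 2) * gOPT Act hAne ρ f
      ≤ ∑ θ, ρ θ * ∑ a, π θ a * f (Finset.univ.image a) := by
  classical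
  have hex : ∀ θ : (∀ i, Θ i), ∃ a ∈ Fintype.piFinset (fun i => Act i (θ i)),
      (Fintype.piFinset fun i => Act i (θ i)).sup'
        (Fintype.piFinset_nonempty.mpr fun i => hAne i (θ i))
        (fun a => f (Finset.univ.image a)) = f (Finset.univ.image a) :=
    fun θ => Finset.exists_mem_eq_sup' _ _
  choose astar hamem haval using hex
  have hamem' : ∀ (θ : ∀ i, Θ i) (i : Fin n), astar θ i ∈ Act i (θ i) :=
    fun θ i => (Fintype.mem_piFinset.mp (hamem θ)) i
  have hOPTeq : gOPT Act hAne ρ f = ∑ θ, ρ θ * f (univ.image fun i => astar θ i) := by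
    unfold gOPT
    refine Finset.sum_congr rfl fun θ _ => ?_
    rw [haval θ]
  have hcg := corr_gap (n := n) (Ω := ∀ i, Θ i) ρ hρ0 hρ1
    (fun i θ' => astar θ' i) f hf0 hmono hsub
  have hA : ∀ ω : Fin n → (∀ i, Θ i),
      ∑ θ, ρ θ * f (univ.image fun i => astar (Function.update (ω i) i (θ i)) i)
        ≤ 2 * ∑ θ, ρ θ * ∑ a, π θ a * f (univ.image a) := by
    intro ω
    refine partA Act ρ hρ0 f hmono hsub v htotal hmarg π hπ0 hπ1 hπsupp hSFCBS
      (fun i t => astar (Function.update (ω i) i t) i) ?_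
    intro i t
    have h := hamem' (Function.update (ω i) i t) i
    rwa [Function.update_self] at h
  have hσ : Function.Involutive (fun x : (∀ i, Θ i) × (Fin n → (∀ i, Θ i)) =>
      ((fun i => x.2 i i), (fun i => Function.update (x.2 i) i (x.1 i)))) := by
    intro x
    refine Prod.ext_iff.mpr ⟨?_, ?_⟩
    · funext i
      simp
    · funext i
      simp [Function.update_idem, Function.update_eq_self]
  have hfact : ∀ ω : Fin n → (∀ i, Θ i),
      ∑ θ : (∀ i, Θ i), ∏ i, ρ (Function.update (ω i) i (θ i))
        = ∏ i, ∏ j ∈ univ.erase i, ρi j (ω i j) := by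
    intro ω
    have h := Finset.prod_univ_sum (fun i : Fin n => (univ : Finset (Θ i)))
      (fun i t => ρ (Function.update (ω i) i t))
    rw [Fintype.piFinset_univ] at h
    rw [← h]
    apply Finset.prod_congr rfl
    intro i _
    have hsplit : ∀ t : Θ i, ρ (Function.update (ω i) i t)
        = ρi i t * ∏ j ∈ univ.erase i, ρi j (ω i j) := by
      intro t
      rw [hprod]
      rw [← Finset.mul_prod_erase univ
        (fun j => ρi j (Function.update (ω i) i t j)) (Finset.mem_univ i)]
      rw [Function.update_self]
      congr 1
      apply Finset.prod_congr rfl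
      intro j hj
      rw [Function.update_of_ne (Finset.ne_of_mem_erase hj)]
    rw [Finset.sum_congr rfl (fun t _ => hsplit t), ← Finset.sum_mul, hρi1, one_mul]
  have hw : ∀ ω : Fin n → (∀ i, Θ i),
      (∏ i, ∏ j ∈ univ.erase i, ρi j (ω i j)) * ρ (fun i => ω i i) = ∏ i, ρ (ω i) := by
    intro ω
    rw [hprod (fun i => ω i i)]
    rw [← Finset.prod_mul_distrib]
    apply Finset.prod_congr rfl
    intro i _
    rw [hprod (ω i)]
    rw [← Finset.mul_prod_erase univ (fun j => ρi j (ω i j)) (Finset.mem_univ i)]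
    ring
  have cov : ∑ ω : Fin n → (∀ i, Θ i), (∏ i, ρ (ω i)) *
        ∑ θ, ρ θ * f (univ.image fun i => astar (Function.update (ω i) i (θ i)) i)
      = ∑ η : Fin n → (∀ i, Θ i), (∏ i, ρ (η i)) *
          f (univ.image fun i => astar (η i) i) := by
    have flat : ∑ ω : Fin n → (∀ i, Θ i), (∏ i, ρ (ω i)) *
          ∑ θ, ρ θ * f (univ.image fun i => astar (Function.update (ω i) i (θ i)) i)
        = ∑ x : (∀ i, Θ i) × (Fin n → (∀ i, Θ i)),
            ρ x.1 * ((∏ i, ρ (x.2 i)) *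
              f (univ.image fun i => astar (Function.update (x.2 i) i (x.1 i)) i)) := by
      rw [Fintype.sum_prod_type]
      rw [Finset.sum_comm]
      apply Finset.sum_congr rfl
      intro ω _
      rw [Finset.mul_sum]
      apply Finset.sum_congr rfl
      intro θ _
      ring
    rw [flat]
    rw [← Equiv.sum_comp (hσ.toPerm _) (fun x : (∀ i, Θ i) × (Fin n → (∀ i, Θ i)) =>
        ρ x.1 * ((∏ i, ρ (x.2 i)) *
          f (univ.image fun i => astar (Function.update (x.2 i) i (x.1 i)) i)))]
    have hpt : ∀ x : (∀ i, Θ i) × (Fin n → (∀ i, Θ i)),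
        ρ (fun i => x.2 i i) * ((∏ i, ρ (Function.update (x.2 i) i (x.1 i))) *
          f (univ.image fun i =>
            astar (Function.update (Function.update (x.2 i) i (x.1 i)) i (x.2 i i)) i))
        = ρ (fun i => x.2 i i) * ((∏ i, ρ (Function.update (x.2 i) i (x.1 i))) *
          f (univ.image fun i => astar (x.2 i) i)) := by
      intro x
      have harg : (fun i =>
          astar (Function.update (Function.update (x.2 i) i (x.1 i)) i (x.2 i i)) i)
          = fun i => astar (x.2 i) i := by
        funext i
        rw [Function.update_idem, Function.update_eq_self]
      rw [harg]
    calc ∑ x : (∀ i, Θ i) × (Fin n → (∀ i, Θ i)),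
          ρ (fun i => x.2 i i) * ((∏ i, ρ (Function.update (x.2 i) i (x.1 i))) *
            f (univ.image fun i =>
              astar (Function.update (Function.update (x.2 i) i (x.1 i)) i (x.2 i i)) i))
        = ∑ x : (∀ i, Θ i) × (Fin n → (∀ i, Θ i)),
            ρ (fun i => x.2 i i) * ((∏ i, ρ (Function.update (x.2 i) i (x.1 i))) *
              f (univ.image fun i => astar (x.2 i) i)) :=
          Finset.sum_congr rfl fun x _ => hpt x
      _ = ∑ ω : Fin n → (∀ i, Θ i),
            (∑ θ : (∀ i, Θ i), ∏ i, ρ (Function.update (ω i) i (θ i))) *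
              (ρ (fun i => ω i i) * f (univ.image fun i => astar (ω i) i)) := by
          rw [Fintype.sum_prod_type]
          rw [Finset.sum_comm]
          apply Finset.sum_congr rfl
          intro ω _
          rw [Finset.sum_mul]
          apply Finset.sum_congr rfl
          intro θ _
          ring
      _ = ∑ η : Fin n → (∀ i, Θ i), (∏ i, ρ (η i)) *
            f (univ.image fun i => astar (η i) i) := by
          apply Finset.sum_congr rfl
          intro ω _
          rw [hfact ω]
          rw [← mul_assoc, hw ω]
  have hchain : (1 - (Real.exp 1)⁻¹) * gOPT Act hAne ρ f
      ≤ 2 * ∑ θ, ρ θ * ∑ a, π θ a * f (Finset.univ.image a) := by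
    rw [hOPTeq]
    refine le_trans hcg ?_
    rw [← cov]
    calc ∑ ω : Fin n → (∀ i, Θ i), (∏ i, ρ (ω i)) *
          ∑ θ, ρ θ * f (univ.image fun i => astar (Function.update (ω i) i (θ i)) i)
        ≤ ∑ ω : Fin n → (∀ i, Θ i), (∏ i, ρ (ω i)) *
            (2 * ∑ θ, ρ θ * ∑ a, π θ a * f (univ.image a)) :=
          Finset.sum_le_sum fun ω _ => mul_le_mul_of_nonneg_left (hA ω)
            (Finset.prod_nonneg fun i _ => hρ0 _)
      _ = 2 * ∑ θ, ρ θ * ∑ a, π θ a * f (univ.image a) := by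
          rw [← Finset.sum_mul, cgPi_sum hρ1, one_mul]
  linarith
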